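/- Let μ_k denote, for each integer k ≥ 1, the unique solution in ((k−1)π, kπ) of 2 cos μ = μ sin μ. Then there exists C > 0 such that for all k ≥ 1, | ∫_{−1}^{0} sin²((1+x)μ_k) dx + ∫_{0}^{1} sin²((1−x)μ_k) dx + sin²(μ_k) − 1 | ≤ C/k². Moreover, for every integer k ≥ 1, ∫_{−1}^{0} sin²(kπx) dx + ∫_{0}^{1} sin²(kπx) dx = 1. -/

import Mathlib

open Real Set

lemma sinsq_shift_int (c : ℝ) (hc : c ≠ 0) :
    (∫ x in (-1 : ℝ)..0, Real.sin ((1 + x) * c) ^ 2) =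
      1 / 2 - Real.sin c * Real.cos c / (2 * c) := by
  have h : ∀ x : ℝ, Real.sin ((1 + x) * c) ^ 2 =
      (fun y => Real.sin y ^ 2) (c * x + c) := by
    intro x; simp only; ring_nf
  simp_rw [h]
  rw [intervalIntegral.integral_comp_mul_add (fun y => Real.sin y ^ 2) hc c]
  simp only [mul_neg, mul_one, neg_add_cancel, mul_zero, zero_add, smul_eq_mul]
  rw [integral_sin_sq]
  simp only [Real.sin_zero, Real.cos_zero, mul_zero, zero_mul]
  field_simp
  ring

lemma sinsq_shift_int' (c : ℝ) (hc : c ≠ 0) :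
    (∫ x in (0 : ℝ)..1, Real.sin ((1 - x) * c) ^ 2) =
      1 / 2 - Real.sin c * Real.cos c / (2 * c) := by
  have h : ∀ x : ℝ, Real.sin ((1 - x) * c) ^ 2 =
      (fun y => Real.sin y ^ 2) ((-c) * x + c) := by
    intro x; simp only; ring_nf
  simp_rw [h]
  rw [intervalIntegral.integral_comp_mul_add (fun y => Real.sin y ^ 2) (neg_ne_zero.mpr hc) c]
  norm_num
  field_simp
  ring

lemma sinsq_mul_int (c : ℝ) (hc : c ≠ 0) (a b : ℝ) :
    (∫ x in a..b, Real.sin (c * x) ^ 2) =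
      c⁻¹ * ((Real.sin (c * a) * Real.cos (c * a)
        - Real.sin (c * b) * Real.cos (c * b) + c * b - c * a) / 2) := by
  rw [intervalIntegral.integral_comp_mul_left (fun y => Real.sin y ^ 2) hc]
  rw [integral_sin_sq]
  simp

theorem dirichlet_eigenvectors_asymptotically_normalized (μ : ℕ → ℝ)
    (hμ : ∀ k : ℕ, 1 ≤ k → μ k ∈ Ioo (((k : ℝ) - 1) * π) ((k : ℝ) * π) ∧
      2 * Real.cos (μ k) = μ k * Real.sin (μ k)) :
    (∃ C > 0, ∀ k : ℕ, 1 ≤ k →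
      |(∫ x in (-1 : ℝ)..0, Real.sin ((1 + x) * μ k) ^ 2) +
       (∫ x in (0 : ℝ)..1, Real.sin ((1 - x) * μ k) ^ 2) +
       Real.sin (μ k) ^ 2 - 1| ≤ C / (k : ℝ) ^ 2) ∧
    (∀ k : ℕ, 1 ≤ k →
      (∫ x in (-1 : ℝ)..0, Real.sin ((k : ℝ) * π * x) ^ 2) +
      (∫ x in (0 : ℝ)..1, Real.sin ((k : ℝ) * π * x) ^ 2) = 1) := by
  constructor
  · refine ⟨1, one_pos, fun k hk => ?_⟩
    obtain ⟨⟨hμ1, hμ2⟩, hchar⟩ := hμ k hk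
    have hk1 : (1 : ℝ) ≤ (k : ℝ) := by exact_mod_cast hk
    have hμpos : 0 < μ k := by
      have h0 : (0 : ℝ) ≤ ((k : ℝ) - 1) * π := mul_nonneg (by linarith) pi_pos.le
      linarith
    have hμne : μ k ≠ 0 := ne_of_gt hμpos
    rw [sinsq_shift_int _ hμne, sinsq_shift_int' _ hμne]
    have hcos : Real.cos (μ k) = μ k * Real.sin (μ k) / 2 := by linarith
    have key : 1 / 2 - Real.sin (μ k) * Real.cos (μ k) / (2 * μ k) +
        (1 / 2 - Real.sin (μ k) * Real.cos (μ k) / (2 * μ k)) +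
        Real.sin (μ k) ^ 2 - 1 = Real.sin (μ k) ^ 2 / 2 := by
      rw [hcos]; field_simp; ring
    rw [key, abs_of_nonneg (by positivity)]
    have hsin1 : Real.sin (μ k) ^ 2 ≤ 1 := Real.sin_sq_le_one _
    rcases eq_or_lt_of_le hk with h1 | h2
    · have hke : (k : ℝ) = 1 := by exact_mod_cast h1.symm
      rw [hke]; norm_num; linarith
    · have hk2 : (2 : ℝ) ≤ (k : ℝ) := by exact_mod_cast h2
      have hcos1 : Real.cos (μ k) ^ 2 ≤ 1 := Real.cos_sq_le_one _
      have hssμ : Real.sin (μ k) ^ 2 * μ k ^ 2 ≤ 4 := by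
        have hsq : (μ k * Real.sin (μ k)) ^ 2 = (2 * Real.cos (μ k)) ^ 2 := by rw [hchar]
        nlinarith [hsq, hcos1]
      have hμ2lb : (k : ℝ) ^ 2 * π ^ 2 / 4 ≤ μ k ^ 2 := by
        have hπ := pi_pos
        have h1 : (k : ℝ) / 2 ≤ (k : ℝ) - 1 := by linarith
        have h2' : (k : ℝ) * π / 2 ≤ μ k := by nlinarith
        nlinarith
      have hkpos : (0 : ℝ) < (k : ℝ) ^ 2 := by positivity
      rw [div_le_div_iff₀ (by norm_num : (0:ℝ) < 2) hkpos, one_mul]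
      have hπ2 : (8 : ℝ) < π ^ 2 := by nlinarith [pi_gt_d6]
      nlinarith [mul_nonneg (sq_nonneg (Real.sin (μ k))) (sub_nonneg.mpr hμ2lb),
        sq_nonneg (Real.sin (μ k)), hkpos]
  · intro k hk
    have hπ : π ≠ 0 := Real.pi_ne_zero
    have hk0 : (k : ℝ) ≠ 0 := Nat.cast_ne_zero.mpr (by omega)
    have hc : (k : ℝ) * π ≠ 0 := mul_ne_zero hk0 hπ
    rw [sinsq_mul_int _ hc, sinsq_mul_int _ hc]
    have hs : Real.sin ((k : ℝ) * π) = 0 := Real.sin_nat_mul_pi k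
    simp only [mul_neg, mul_one, mul_zero, Real.sin_neg, hs, neg_zero, zero_mul,
      Real.sin_zero, sub_zero, zero_sub, zero_add, neg_neg, sub_neg_eq_add]
    field_simp
    norm_num
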